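/- Let L be a real m×m symmetric positive semidefinite matrix with L · 1 = 0 (m ≥ 2), and let λ_1 ≤ λ_2 ≤ … ≤ λ_m be its eigenvalues in nondecreasing order. Then ‖I − L − J‖ = max(1 − λ_2, λ_m − 1), where I is the identity matrix, J is the m×m matrix with all entries 1/m, and ‖·‖ is the spectral norm. -/

import Mathlib

open Matrix Finset

/-- The m×m matrix with all entries equal to 1/m. -/
noncomputable def Jmat (m : ℕ) : Matrix (Fin m) (Fin m) ℝ :=
  Matrix.of fun _ _ => (1 : ℝ) / m

/-- The spectral norm (ℓ2 operator norm on Euclidean space) of a real square matrix. -/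
noncomputable def specNorm {m : ℕ} (M : Matrix (Fin m) (Fin m) ℝ) : ℝ :=
  ‖(Matrix.toEuclideanCLM (𝕜 := ℝ) M :
      EuclideanSpace ℝ (Fin m) →L[ℝ] EuclideanSpace ℝ (Fin m))‖

set_option maxHeartbeats 4000000 in
/-- for a real m×m symmetric positive semidefinite `L` with `L · 1 = 0`
(`m ≥ 2`), writing `lam 0 ≤ lam 1 ≤ … ≤ lam (m-1)` for its eigenvalues in nondecreasing
order, the spectral norm satisfies `‖I − L − J‖ = max (1 − λ₂) (λ_m − 1)`. -/
theorem specNorm_I_sub_lap_sub_J {m : ℕ} (hm : 2 ≤ m)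
    (L : Matrix (Fin m) (Fin m) ℝ) (hL : L.PosSemidef)
    (hL1 : L *ᵥ (fun _ => (1 : ℝ)) = 0)
    (lam : Fin m → ℝ) (hmono : Monotone lam)
    (hperm : ∃ σ : Equiv.Perm (Fin m), lam = hL.isHermitian.eigenvalues ∘ σ) :
    specNorm ((1 : Matrix (Fin m) (Fin m) ℝ) - L - Jmat m)
      = max (1 - lam ⟨1, by omega⟩) (lam ⟨m - 1, by omega⟩ - 1) := by
  classical
  obtain ⟨σ, hσ⟩ := hperm
  set i0 : Fin m := ⟨0, by omega⟩ with hi0def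
  set i1 : Fin m := ⟨1, by omega⟩ with hi1def
  set ilast : Fin m := ⟨m - 1, by omega⟩ with hilastdef
  set r : ℝ := max (1 - lam i1) (lam ilast - 1) with hrdef
  set μ := hL.isHermitian.eigenvalues with hμdef
  set b := hL.isHermitian.eigenvectorBasis with hbdef
  set N : Matrix (Fin m) (Fin m) ℝ := (1 : Matrix (Fin m) (Fin m) ℝ) - L - Jmat m with hNdef
  have hm0 : (0:ℝ) < m := by positivity
  have hmne : (m:ℝ) ≠ 0 := ne_of_gt hm0
  -- the coordinate functional
  set R : (Fin m → ℝ) → Fin m → ℝ := fun x i => (⇑(b i) : Fin m → ℝ) ⬝ᵥ x with hRdef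
  have hRrepr : ∀ (x : Fin m → ℝ) (i : Fin m),
      R x i = b.repr ((WithLp.equiv 2 (Fin m → ℝ)).symm x) i := by
    intro x i
    rw [OrthonormalBasis.repr_apply_apply]
    simp [hRdef, PiLp.inner_apply, RCLike.inner_apply, dotProduct]
    exact Finset.sum_congr rfl fun _ _ => mul_comm _ _
  have hK2 : ∀ x y : Fin m → ℝ, (∑ i, R x i * R y i) = ∑ i, x i * y i := by
    intro x y
    have h1 := b.repr.inner_map_map ((WithLp.equiv 2 (Fin m → ℝ)).symm y)
      ((WithLp.equiv 2 (Fin m → ℝ)).symm x)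
    simp only [PiLp.inner_apply, RCLike.inner_apply, starRingEnd_apply, star_trivial] at h1
    calc (∑ i, R x i * R y i)
        = ∑ i, b.repr ((WithLp.equiv 2 (Fin m → ℝ)).symm x) i
            * b.repr ((WithLp.equiv 2 (Fin m → ℝ)).symm y) i := by
          refine Finset.sum_congr rfl fun i _ => by rw [hRrepr, hRrepr]
      _ = ∑ i, x i * y i := by
          rw [h1]
          refine Finset.sum_congr rfl fun i _ => by
            rfl
  have hK1 : ∀ x : Fin m → ℝ, (∑ i, R x i ^ 2) = ∑ i, x i ^ 2 := by
    intro x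
    simpa [pow_two] using hK2 x x
  have hsymm : Lᵀ = L := by
    simpa [Matrix.conjTranspose_eq_transpose_of_trivial] using hL.isHermitian.eq
  have hK3 : ∀ (x : Fin m → ℝ) (i : Fin m), R (L *ᵥ x) i = μ i * R x i := by
    intro x i
    calc R (L *ᵥ x) i = (⇑(b i) ᵥ* L) ⬝ᵥ x := by
          rw [hRdef]; exact dotProduct_mulVec _ _ _
      _ = (L *ᵥ ⇑(b i)) ⬝ᵥ x := by nth_rewrite 1 [← hsymm]; rw [vecMul_transpose]
      _ = (μ i • ⇑(b i)) ⬝ᵥ x := by rw [hL.isHermitian.mulVec_eigenvectorBasis]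
      _ = μ i * R x i := by rw [smul_dotProduct]; rfl
  have hd0 : ∀ i, μ i * R (fun _ => (1:ℝ)) i = 0 := by
    intro i
    have h := hK3 (fun _ => (1:ℝ)) i
    rw [hL1] at h
    simp only [hRdef, dotProduct_zero] at h
    exact h.symm
  have hdsq : (∑ i, R (fun _ => (1:ℝ)) i ^ 2) = m := by
    rw [hK1]; simp
  have hJmul : ∀ v : Fin m → ℝ, Jmat m *ᵥ v = ((∑ j, v j) / m) • (fun _ => (1:ℝ)) := by
    intro v
    funext j
    simp only [Jmat, Matrix.of_apply, mulVec, dotProduct, Pi.smul_apply, smul_eq_mul,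
      div_eq_mul_inv, one_mul, mul_one]
    rw [Finset.sum_mul]
    exact Finset.sum_congr rfl fun k _ => mul_comm _ _
  have hRsub : ∀ (x y : Fin m → ℝ) (i : Fin m), R (x - y) i = R x i - R y i := by
    intro x y i; simp [hRdef, dotProduct_sub]
  have hRsmul : ∀ (t : ℝ) (x : Fin m → ℝ) (i : Fin m), R (t • x) i = t * R x i := by
    intro t x i; simp [hRdef, dotProduct_smul]
  have heigen : ∀ j, L *ᵥ (⇑(b j) : Fin m → ℝ) = μ j • ⇑(b j) :=
    hL.isHermitian.mulVec_eigenvectorBasis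
  have hμnn : ∀ i, 0 ≤ μ i := fun i => hL.eigenvalues_nonneg i
  have hbne : ∀ i, (⇑(b i) : Fin m → ℝ) ≠ 0 := by
    intro i h
    exact b.orthonormal.ne_zero i ((WithLp.equiv 2 (Fin m → ℝ)).injective (by simpa using h))
  have horth : ∀ k l, R (⇑(b k) : Fin m → ℝ) l = if l = k then 1 else 0 := by
    intro k l
    rw [hRrepr]
    rw [show (WithLp.equiv 2 (Fin m → ℝ)).symm (⇑(b k)) = b k from Equiv.symm_apply_apply _ _]
    rw [OrthonormalBasis.repr_self]
    rw [EuclideanSpace.single_apply]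
  clear_value b μ R
  have hNv : ∀ (v : Fin m → ℝ) (i : Fin m),
      R (N *ᵥ v) i = (1 - μ i) * R v i - ((∑ j, v j) / m) * R (fun _ => (1:ℝ)) i := by
    intro v i
    have : N *ᵥ v = v - L *ᵥ v - ((∑ j, v j) / m) • (fun _ => (1:ℝ)) := by
      rw [hNdef, Matrix.sub_mulVec, Matrix.sub_mulVec, Matrix.one_mulVec, hJmul]
    rw [this, hRsub, hRsub, hRsmul, hK3]
    ring
  have hsum : ∀ v : Fin m → ℝ, (∑ i, R (N *ᵥ v) i ^ 2)
      = (∑ i, ((1 - μ i) * R v i) ^ 2) - (∑ j, v j) ^ 2 / m := by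
    intro v
    obtain ⟨s, hs⟩ : ∃ s, (∑ j, v j) = s := ⟨_, rfl⟩
    rw [hs]
    have hexp : ∀ i, R (N *ᵥ v) i ^ 2
        = ((1 - μ i) * R v i) ^ 2 - 2 * (s / m) * (R v i * R (fun _ => (1:ℝ)) i)
          + (s / m) ^ 2 * R (fun _ => (1:ℝ)) i ^ 2 := by
      intro i
      rw [hNv v i, hs]
      have h := hd0 i
      linear_combination (2 * (s / (m:ℝ)) * R v i) * h
    calc (∑ i, R (N *ᵥ v) i ^ 2)
        = ∑ i, (((1 - μ i) * R v i) ^ 2 - 2 * (s / m) * (R v i * R (fun _ => (1:ℝ)) i)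
            + (s / m) ^ 2 * R (fun _ => (1:ℝ)) i ^ 2) := Finset.sum_congr rfl fun i _ => hexp i
      _ = (∑ i, ((1 - μ i) * R v i) ^ 2) - 2 * (s / m) * (∑ i, R v i * R (fun _ => (1:ℝ)) i)
            + (s / m) ^ 2 * (∑ i, R (fun _ => (1:ℝ)) i ^ 2) := by
          rw [Finset.sum_add_distrib, Finset.sum_sub_distrib, ← Finset.mul_sum, ← Finset.mul_sum]
      _ = (∑ i, ((1 - μ i) * R v i) ^ 2) - s ^ 2 / m := by
          rw [hK2 v (fun _ => (1:ℝ)), hdsq]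
          simp only [mul_one, hs]
          field_simp
          ring
  -- eigenvalue facts
  have hμlam : ∀ i, μ i = lam (σ.symm i) := by
    intro i; rw [hσ]; simp
  have hlam_nonneg : ∀ j, 0 ≤ lam j := by
    intro j; rw [hσ]; simp only [Function.comp_apply]; exact hμnn _
  have hlam0 : lam i0 = 0 := by
    have hex : ∃ i, R (fun _ => (1:ℝ)) i ≠ 0 := by
      by_contra h
      push_neg at h
      have hz : (∑ i, R (fun _ => (1:ℝ)) i ^ 2) = 0 :=
        Finset.sum_eq_zero fun i _ => by rw [h i]; ring
      rw [hz] at hdsq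
      exact hmne hdsq.symm
    obtain ⟨i, hi⟩ := hex
    have hμi : μ i = 0 := by
      rcases mul_eq_zero.mp (hd0 i) with h | h
      · exact h
      · exact absurd h hi
    have h1 : lam (σ.symm i) = 0 := by rw [← hμlam]; exact hμi
    refine le_antisymm ?_ (hlam_nonneg i0)
    calc lam i0 ≤ lam (σ.symm i) := hmono (by simp [hi0def, Fin.le_def])
      _ = 0 := h1
  have hμmax : ∀ i, μ i ≤ lam ilast := by
    intro i
    rw [hμlam]
    refine hmono ?_
    rw [hilastdef, Fin.le_def]
    show (σ.symm i).1 ≤ m - 1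
    have := (σ.symm i).isLt
    omega
  have hμmin : ∀ i, μ i ≠ 0 → lam i1 ≤ μ i := by
    intro i h
    rw [hμlam]
    rw [hμlam] at h
    refine hmono ?_
    rw [hi1def, Fin.le_def]
    show 1 ≤ (σ.symm i).1
    by_contra hc
    push_neg at hc
    have : σ.symm i = i0 := by rw [hi0def]; exact Fin.ext (by show (σ.symm i).1 = 0; omega)
    rw [this, hlam0] at h
    exact h rfl
  have hi1last : lam i1 ≤ lam ilast := by
    refine hmono ?_
    rw [hi1def, hilastdef]
    exact Fin.mk_le_mk.mpr (by omega)
  have hr0 : 0 ≤ r := by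
    rcases le_total (lam i1) 1 with h | h
    · exact le_trans (by linarith) (le_max_left _ _)
    · exact le_trans (by linarith) (le_max_right _ _)
  have hbound : ∀ i, μ i ≠ 0 → (1 - μ i) ^ 2 ≤ r ^ 2 := by
    intro i h
    have h1 : 1 - μ i ≤ r := le_trans (by linarith [hμmin i h]) (le_max_left _ _)
    have h2 : -r ≤ 1 - μ i := by
      have : μ i - 1 ≤ r := le_trans (by linarith [hμmax i]) (le_max_right _ _)
      linarith
    exact sq_le_sq' h2 h1
  -- core upper bound
  have hcore : ∀ v : Fin m → ℝ, (∑ i, R (N *ᵥ v) i ^ 2) ≤ r ^ 2 * ∑ i, v i ^ 2 := by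
    intro v
    rw [hsum v, ← hK1 v]
    rcases le_or_gt 1 r with h1r | h1r
    · have hterm : ∀ i : Fin m, ((1 - μ i) * R v i) ^ 2 ≤ r ^ 2 * R v i ^ 2 := by
        intro i
        rw [mul_pow]
        rcases eq_or_ne (μ i) 0 with h | h
        · rw [h]
          have h2 : (1:ℝ) ≤ r ^ 2 := by
            have := mul_le_mul h1r h1r (by norm_num) hr0
            simpa [pow_two] using this
          have h3 : ((1:ℝ) - 0) ^ 2 * R v i ^ 2 = 1 * R v i ^ 2 := by ring
          rw [h3, one_mul]
          exact le_mul_of_one_le_left (sq_nonneg _) h2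
        · exact mul_le_mul_of_nonneg_right (hbound i h) (sq_nonneg _)
      calc (∑ i, ((1 - μ i) * R v i) ^ 2) - (∑ j, v j) ^ 2 / m
          ≤ ∑ i, ((1 - μ i) * R v i) ^ 2 := by
            have : 0 ≤ (∑ j, v j) ^ 2 / m := by positivity
            linarith
        _ ≤ ∑ i, r ^ 2 * R v i ^ 2 := Finset.sum_le_sum fun i _ => hterm i
        _ = r ^ 2 * ∑ i, R v i ^ 2 := by rw [← Finset.mul_sum]
    · -- r < 1 : the zero eigenvalue is simple
      have hpos : 0 < lam i1 := by
        have := le_max_left (1 - lam i1) (lam ilast - 1)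
        rw [← hrdef] at this
        linarith
      have huniq : ∀ i, μ i = 0 → i = σ i0 := by
        intro i h
        have h2 : σ.symm i = i0 := by
          by_contra hne
          have hge : lam i1 ≤ lam (σ.symm i) := by
            refine hmono ?_
            rw [hi1def, Fin.le_def]
            show 1 ≤ (σ.symm i).1
            rcases Nat.lt_or_ge (σ.symm i).1 1 with hc | hc
            · exact absurd (Fin.ext (show (σ.symm i).1 = (0:ℕ) by omega) : σ.symm i = i0) hne
            · omega
          rw [← hμlam, h] at hge
          linarith
        calc i = σ (σ.symm i) := (σ.apply_symm_apply i).symm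
          _ = σ i0 := by rw [h2]
      have hμj0 : μ (σ i0) = 0 := by rw [hμlam]; simp [hlam0]
      have hdoff : ∀ i, i ≠ σ i0 → R (fun _ => (1:ℝ)) i = 0 := by
        intro i hne
        rcases mul_eq_zero.mp (hd0 i) with h | h
        · exact absurd (huniq i h) hne
        · exact h
      have hdj0 : R (fun _ => (1:ℝ)) (σ i0) ^ 2 = m := by
        rw [← hdsq]
        symm
        apply Finset.sum_eq_single
        · intro i _ hne
          rw [hdoff i hne]
          ring
        · intro h
          exact absurd (Finset.mem_univ _) h
      have hsval : (∑ j, v j) = R v (σ i0) * R (fun _ => (1:ℝ)) (σ i0) := by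
        have h1 := hK2 v (fun _ => (1:ℝ))
        simp only [mul_one] at h1
        rw [← h1]
        apply Finset.sum_eq_single
        · intro i _ hne
          rw [hdoff i hne]
          ring
        · intro h
          exact absurd (Finset.mem_univ _) h
      have hs2 : (∑ j, v j) ^ 2 / m = R v (σ i0) ^ 2 := by
        rw [hsval, mul_pow, hdj0]
        field_simp
      have hsplit : (∑ i, ((1 - μ i) * R v i) ^ 2)
          = R v (σ i0) ^ 2 + ∑ i ∈ Finset.univ.erase (σ i0), ((1 - μ i) * R v i) ^ 2 := by
        rw [← Finset.add_sum_erase _ _ (Finset.mem_univ (σ i0))]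
        congr 1
        rw [hμj0]
        ring
      rw [hsplit, hs2]
      have hterm : ∀ i ∈ Finset.univ.erase (σ i0), ((1 - μ i) * R v i) ^ 2 ≤ r ^ 2 * R v i ^ 2 := by
        intro i hi
        have hne : i ≠ σ i0 := Finset.ne_of_mem_erase hi
        have hμne : μ i ≠ 0 := fun h => hne (huniq i h)
        rw [mul_pow]
        exact mul_le_mul_of_nonneg_right (hbound i hμne) (sq_nonneg _)
      calc R v (σ i0) ^ 2 + (∑ i ∈ Finset.univ.erase (σ i0), ((1 - μ i) * R v i) ^ 2)
            - R v (σ i0) ^ 2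
          = ∑ i ∈ Finset.univ.erase (σ i0), ((1 - μ i) * R v i) ^ 2 := by ring
        _ ≤ ∑ i ∈ Finset.univ.erase (σ i0), r ^ 2 * R v i ^ 2 := Finset.sum_le_sum hterm
        _ = r ^ 2 * ∑ i ∈ Finset.univ.erase (σ i0), R v i ^ 2 := by rw [← Finset.mul_sum]
        _ ≤ r ^ 2 * ∑ i, R v i ^ 2 := by
            refine mul_le_mul_of_nonneg_left ?_ (sq_nonneg r)
            exact Finset.sum_le_sum_of_subset_of_nonneg (Finset.subset_univ _)
              (fun i _ _ => sq_nonneg _)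
  -- norm translation
  have hnormE : ∀ x : Fin m → ℝ,
      ‖(WithLp.equiv 2 (Fin m → ℝ)).symm x‖ = Real.sqrt (∑ i, x i ^ 2) := by
    intro x
    rw [EuclideanSpace.norm_eq]
    congr 1
    refine Finset.sum_congr rfl fun i _ => ?_
    rw [Real.norm_eq_abs]; exact sq_abs _
  have hCLM : ∀ (A : Matrix (Fin m) (Fin m) ℝ) (x : Fin m → ℝ),
      (Matrix.toEuclideanCLM (𝕜 := ℝ) A) ((WithLp.equiv 2 (Fin m → ℝ)).symm x)
        = (WithLp.equiv 2 (Fin m → ℝ)).symm (A *ᵥ x) := by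
    intro A x
    exact Matrix.toEuclideanCLM_toLp A x
  have hub : specNorm N ≤ r := by
    unfold specNorm
    apply ContinuousLinearMap.opNorm_le_bound _ hr0
    intro x
    obtain ⟨v, rfl⟩ : ∃ v : Fin m → ℝ, (WithLp.equiv 2 (Fin m → ℝ)).symm v = x :=
      ⟨WithLp.equiv 2 (Fin m → ℝ) x, by simp⟩
    rw [hCLM, hnormE, hnormE]
    have h1 : (∑ i, (N *ᵥ v) i ^ 2) ≤ r ^ 2 * ∑ i, v i ^ 2 := by
      rw [← hK1 (N *ᵥ v)]
      exact hcore v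
    calc Real.sqrt (∑ i, (N *ᵥ v) i ^ 2) ≤ Real.sqrt (r ^ 2 * ∑ i, v i ^ 2) :=
          Real.sqrt_le_sqrt h1
      _ = r * Real.sqrt (∑ i, v i ^ 2) := by
          rw [Real.sqrt_mul (sq_nonneg r), Real.sqrt_sq hr0]
  -- eigenvector lower bounds
  have hspec0 : (0:ℝ) ≤ specNorm N := norm_nonneg _
  have hev : ∀ (w : Fin m → ℝ) (t : ℝ), w ≠ 0 → N *ᵥ w = t • w → |t| ≤ specNorm N := by
    intro w t hw hNw
    have hwn : (0:ℝ) < ‖(WithLp.equiv 2 (Fin m → ℝ)).symm w‖ := by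
      rw [norm_pos_iff]
      intro h
      apply hw
      have := congrArg (WithLp.equiv 2 (Fin m → ℝ)) h
      simpa using this
    have h1 := (Matrix.toEuclideanCLM (𝕜 := ℝ) N).le_opNorm
      ((WithLp.equiv 2 (Fin m → ℝ)).symm w)
    rw [hCLM, hNw] at h1
    rw [show (WithLp.equiv 2 (Fin m → ℝ)).symm (t • w)
        = t • (WithLp.equiv 2 (Fin m → ℝ)).symm w from by simp] at h1
    rw [norm_smul, Real.norm_eq_abs] at h1
    exact le_of_mul_le_mul_right h1 hwn
  have hsb : ∀ k, (∑ j, (⇑(b k) : Fin m → ℝ) j) = R (fun _ => (1:ℝ)) k := by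
    intro k
    rw [hRdef]
    simp [dotProduct]
  have hNb : ∀ i, R (fun _ => (1:ℝ)) i = 0 →
      N *ᵥ (⇑(b i) : Fin m → ℝ) = (1 - μ i) • (⇑(b i) : Fin m → ℝ) := by
    intro i hd
    have h2 : N *ᵥ (⇑(b i) : Fin m → ℝ) = ⇑(b i) - L *ᵥ ⇑(b i)
        - ((∑ j, (⇑(b i) : Fin m → ℝ) j) / m) • (fun _ => (1:ℝ)) := by
      rw [hNdef, Matrix.sub_mulVec, Matrix.sub_mulVec, Matrix.one_mulVec, hJmul]
    rw [h2, heigen i, hsb, hd]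
    funext j
    simp only [Pi.sub_apply, Pi.smul_apply, smul_eq_mul, zero_div, zero_mul, sub_zero]
    ring
  have hμσ : ∀ j : Fin m, μ (σ j) = lam j := by
    intro j; rw [hμlam, Equiv.symm_apply_apply]
  have hdzero : ∀ i, μ i ≠ 0 → R (fun _ => (1:ℝ)) i = 0 := by
    intro i hne
    rcases mul_eq_zero.mp (hd0 i) with h0 | h0
    · exact absurd h0 hne
    · exact h0
  have hlb2 : lam ilast - 1 ≤ specNorm N := by
    rcases le_or_gt (lam ilast) 1 with h | h
    · linarith
    · have hne : μ (σ ilast) ≠ 0 := by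
        rw [hμσ]; intro h0; rw [h0] at h; linarith
      have h1 := hev (⇑(b (σ ilast))) (1 - μ (σ ilast)) (hbne _) (hNb _ (hdzero _ hne))
      rw [hμσ] at h1
      calc lam ilast - 1 ≤ |1 - lam ilast| := by
            rw [abs_sub_comm]; exact le_abs_self _
        _ ≤ specNorm N := h1
  have hlb1 : 1 - lam i1 ≤ specNorm N := by
    rcases le_or_gt (1:ℝ) (lam i1) with h | h
    · linarith
    rcases (hlam_nonneg i1).lt_or_eq with h0 | h0
    · have hne : μ (σ i1) ≠ 0 := by rw [hμσ]; exact ne_of_gt h0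
      have h1 := hev (⇑(b (σ i1))) (1 - μ (σ i1)) (hbne _) (hNb _ (hdzero _ hne))
      rw [hμσ] at h1
      calc 1 - lam i1 ≤ |1 - lam i1| := le_abs_self _
        _ ≤ specNorm N := h1
    · -- lam i1 = 0
      have hz1 : μ (σ i0) = 0 := by rw [hμσ, hlam0]
      have hz2 : μ (σ i1) = 0 := by rw [hμσ, ← h0]
      have hne12 : σ i0 ≠ σ i1 := by
        intro hq
        have h2 := σ.injective hq
        rw [hi0def, hi1def] at h2
        have h3 := congrArg Fin.val h2
        simp only [] at h3
        omega
      rcases eq_or_ne (R (fun _ => (1:ℝ)) (σ i0)) 0 with hd1 | hd1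
      · have h1 := hev (⇑(b (σ i0))) (1 - μ (σ i0)) (hbne _) (hNb _ hd1)
        rw [hz1] at h1
        rw [sub_zero, abs_one] at h1
        linarith
      · set w : Fin m → ℝ := R (fun _ => (1:ℝ)) (σ i1) • (⇑(b (σ i0)) : Fin m → ℝ)
            - R (fun _ => (1:ℝ)) (σ i0) • (⇑(b (σ i1)) : Fin m → ℝ) with hw
        have hRw : R w (σ i1) = - R (fun _ => (1:ℝ)) (σ i0) := by
          rw [hw, hRsub, hRsmul, hRsmul, horth, horth]
          rw [if_neg (fun hq => hne12 hq.symm), if_pos rfl]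
          ring
        have hR0 : R 0 (σ i1) = 0 := by rw [hRdef]; simp
        have hwne : w ≠ 0 := by
          intro hq
          rw [hq, hR0] at hRw
          exact hd1 (by linarith)
        have hLw : L *ᵥ w = 0 := by
          rw [hw, Matrix.mulVec_sub, Matrix.mulVec_smul, Matrix.mulVec_smul,
            heigen, heigen, hz1, hz2]
          simp
        have hSw : (∑ j, w j) = 0 := by
          rw [hw]
          simp only [Pi.sub_apply, Pi.smul_apply, smul_eq_mul]
          rw [Finset.sum_sub_distrib, ← Finset.mul_sum, ← Finset.mul_sum, hsb, hsb]
          ring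
        have hNw : N *ᵥ w = (1:ℝ) • w := by
          have h2 : N *ᵥ w = w - L *ᵥ w - ((∑ j, w j) / m) • (fun _ => (1:ℝ)) := by
            rw [hNdef, Matrix.sub_mulVec, Matrix.sub_mulVec, Matrix.one_mulVec, hJmul]
          rw [h2, hLw, hSw]
          funext j
          simp
        have h1 := hev w 1 hwne hNw
        rw [abs_one] at h1
        linarith
  exact le_antisymm hub (max_le hlb1 hlb2)
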